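/- For all sufficiently large r, the matching width of T_r(P_{2r}) is at least (log₂ n)²/16, where n is the number of vertices of T_r(P_{2r}). -/

import Mathlib

open SimpleGraph

/-- There is a matching of size `t` in `G` all of whose edges have one end in `A` and the
other end outside `A`. -/
def HasCutMatching {V : Type} (G : SimpleGraph V) (A : Set V) (t : ℕ) : Prop :=
  ∃ a b : Fin t → V, Function.Injective a ∧ Function.Injective b ∧
    ∀ i, a i ∈ A ∧ b i ∉ A ∧ G.Adj (a i) (b i)

/-- The matching width of `G`: the minimum over all permutations (orderings) of `V(G)` of
the maximum, over all prefixes, of the size of a largest matching consisting of edges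
between the prefix and the rest of the vertices. -/
noncomputable def matchingWidth {V : Type} [Fintype V] (G : SimpleGraph V) : ℕ :=
  ⨅ σ : Fin (Fintype.card V) ≃ V, ⨆ i : Fin (Fintype.card V + 1),
    sSup {t | HasCutMatching G {v | ((σ.symm v : Fin (Fintype.card V)) : ℕ) < (i : ℕ)} t}

/-- The complete binary tree of height `r`, with `2^(r+1) - 1` vertices in heap
numbering: vertex `i` is adjacent to its children `2i+1` and `2i+2`. -/
def completeBinaryTree (r : ℕ) : SimpleGraph (Fin (2 ^ (r + 1) - 1)) :=
  SimpleGraph.fromRel (fun i j => (j : ℕ) = 2 * (i : ℕ) + 1 ∨ (j : ℕ) = 2 * (i : ℕ) + 2)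

namespace MWProof


/-- parent in heap numbering -/
def par (m : ℕ) : ℕ := (m - 1) / 2

lemma par_le (m : ℕ) : par m ≤ m := by unfold par; omega

lemma par_lt {m : ℕ} (h : 1 ≤ m) : par m < m := by unfold par; omega

lemma iter_par_le (k m : ℕ) : par^[k] m ≤ m := by
  induction k generalizing m with
  | zero => simp
  | succ k ih =>
    rw [Function.iterate_succ_apply]
    exact (ih (par m)).trans (par_le m)

lemma iter_par_le_par {k : ℕ} (hk : 1 ≤ k) (m : ℕ) : par^[k] m ≤ par m := by
  obtain ⟨k', rfl⟩ : ∃ k', k = k' + 1 := ⟨k - 1, by omega⟩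
  rw [Function.iterate_succ_apply]
  exact iter_par_le k' (par m)

/-- `m` is in the subtree rooted at `j` -/
def D (j m : ℕ) : Prop := ∃ e, par^[e] m = j

lemma D_refl (j : ℕ) : D j j := ⟨0, rfl⟩

lemma D_trans {j g m : ℕ} (h1 : D j g) (h2 : D g m) : D j m := by
  obtain ⟨e1, he1⟩ := h1
  obtain ⟨e2, he2⟩ := h2
  exact ⟨e1 + e2, by rw [Function.iterate_add_apply, he2, he1]⟩

lemma D_le {j m : ℕ} (h : D j m) : j ≤ m := by
  obtain ⟨e, he⟩ := h
  rw [← he]; exact iter_par_le e m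

lemma D_of_iter_le {j m e i : ℕ} (he : par^[e] m = j) (hi : i ≤ e) : D j (par^[i] m) :=
  ⟨e - i, by rw [← Function.iterate_add_apply, Nat.sub_add_cancel hi, he]⟩

lemma D_disj {j g g' m : ℕ} (hne : g ≠ g') (h1 : par g ≤ 2*j+1) (h2 : par g' ≤ 2*j+1)
    (h3 : 2*j+2 ≤ g) (h4 : 2*j+2 ≤ g') (hm : D g m) (hm' : D g' m) : False := by
  obtain ⟨e, he⟩ := hm
  obtain ⟨f, hf⟩ := hm'
  have key : ∀ (x y k : ℕ), 1 ≤ k → par^[k] x = y → par x ≤ 2*j+1 → 2*j+2 ≤ y → False := by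
    intro x y k hk hxy hx hy
    have := (iter_par_le_par hk x).trans hx
    omega
  rcases lt_trichotomy e f with h | h | h
  · have : par^[f - e] g = g' := by
      rw [← he, ← Function.iterate_add_apply, Nat.sub_add_cancel (le_of_lt h), hf]
    exact key g g' (f - e) (by omega) this h1 h4
  · subst h; exact hne (he.symm.trans hf)
  · have : par^[e - f] g' = g := by
      rw [← hf, ← Function.iterate_add_apply, Nat.sub_add_cancel (le_of_lt h), he]
    exact key g' g (e - f) (by omega) this h2 h3

lemma flip_exists (P : ℕ → Prop) : ∀ (e u : ℕ), P u → ¬ P (par^[e] u) →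
    ∃ k, k < e ∧ P (par^[k] u) ∧ ¬ P (par^[k+1] u) := by
  intro e
  induction e with
  | zero => intro u h1 h2; simp at h2; exact absurd h1 h2
  | succ e ih =>
    intro u h1 h2
    by_cases h : P (par u)
    · obtain ⟨k, hk, hk1, hk2⟩ := ih (par u) h (by rwa [← Function.iterate_succ_apply])
      exact ⟨k + 1, by omega, by rwa [Function.iterate_succ_apply],
        by rwa [Function.iterate_succ_apply]⟩
    · exact ⟨0, by omega, h1, by simpa using h⟩

lemma natflip (Q : ℕ → Prop) : ∀ (d a : ℕ), Q a → ¬ Q (a + d) →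
    ∃ k, a ≤ k ∧ k < a + d ∧ Q k ∧ ¬ Q (k+1) := by
  intro d
  induction d with
  | zero => intro a h1 h2; simp at h2; exact absurd h1 h2
  | succ d ih =>
    intro a h1 h2
    by_cases h : Q (a + 1)
    · obtain ⟨k, hk1, hk2, hk3, hk4⟩ := ih (a+1) h (by rwa [show a+1+d = a+(d+1) by omega])
      exact ⟨k, by omega, by omega, hk3, hk4⟩
    · exact ⟨a, le_refl _, by omega, h1, h⟩


abbrev Vt (r : ℕ) := Fin (2^(r+1) - 1) × Fin (2*r)
abbrev Gr (r : ℕ) := completeBinaryTree r □ pathGraph (2*r)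
abbrev nn (r : ℕ) : ℕ := Fintype.card (Vt r)

variable {r : ℕ} (σ : Fin (nn r) ≃ Vt r)

def Aset (t : ℕ) : Set (Vt r) := {v | ((σ.symm v : Fin (nn r)) : ℕ) < t}

/-- vertex (m, x) is in the prefix at time t -/
def inA (m : ℕ) (x : Fin (2*r)) (t : ℕ) : Prop :=
  ∃ h : m < 2^(r+1) - 1, (⟨m, h⟩, x) ∈ Aset σ t

open scoped Classical in
noncomputable def cnt (m : ℕ) (t : ℕ) : ℕ :=
  (Finset.univ.filter (fun x : Fin (2*r) => inA σ m x t)).card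

lemma Aset_mono {t t' : ℕ} (h : t ≤ t') : Aset σ t ⊆ Aset σ t' := by
  intro v hv; exact lt_of_lt_of_le hv h

lemma cnt_mono (m : ℕ) {t t' : ℕ} (h : t ≤ t') : cnt σ m t ≤ cnt σ m t' := by
  classical
  apply Finset.card_le_card
  intro x hx
  simp only [Finset.mem_filter] at *
  obtain ⟨_, h1, h2⟩ := hx
  exact ⟨Finset.mem_univ x, h1, Aset_mono σ h h2⟩

lemma cnt_le (m t : ℕ) : cnt σ m t ≤ 2*r := by
  classical
  calc cnt σ m t ≤ Finset.univ.card := Finset.card_filter_le _ _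
  _ = 2*r := by simp

lemma cnt_zero (m : ℕ) : cnt σ m 0 = 0 := by
  classical
  simp only [cnt, Finset.card_eq_zero, Finset.filter_eq_empty_iff]
  rintro x - ⟨h, hx⟩
  exact absurd hx (by simp [Aset])

lemma cnt_full {m : ℕ} (h : m < 2^(r+1) - 1) (ht : nn r ≤ t) : cnt σ m t = 2*r := by
  classical
  simp only [cnt]
  rw [Finset.filter_true_of_mem, Finset.card_univ, Fintype.card_fin]
  intro x _
  exact ⟨h, lt_of_lt_of_le (Fin.is_lt _) ht⟩

lemma cnt_eq_zero_iff (m t : ℕ) : cnt σ m t = 0 ↔ ∀ x, ¬ inA σ m x t := by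
  classical
  simp only [cnt, Finset.card_eq_zero, Finset.filter_eq_empty_iff]
  constructor
  · intro h x hx; exact h (Finset.mem_univ x) hx
  · intro h x _; exact h x

lemma cnt_pos_iff (m t : ℕ) : 0 < cnt σ m t ↔ ∃ x, inA σ m x t := by
  classical
  simp only [cnt, Finset.card_pos, Finset.filter_nonempty_iff]
  constructor
  · rintro ⟨x, -, hx⟩; exact ⟨x, hx⟩
  · rintro ⟨x, hx⟩; exact ⟨x, Finset.mem_univ x, hx⟩

lemma cnt_lt_all (m t : ℕ) (h : cnt σ m t < 2*r) : ∃ x, ¬ inA σ m x t := by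
  classical
  by_contra hc
  push_neg at hc
  have : cnt σ m t = 2*r := by
    simp only [cnt]
    rw [Finset.filter_true_of_mem fun x _ => hc x, Finset.card_univ, Fintype.card_fin]
  omega

lemma cnt_step_ne (t : ℕ) (ht : t < nn r) (m : ℕ)
    (hm : m ≠ ((σ ⟨t, ht⟩).1 : ℕ)) : cnt σ m (t+1) = cnt σ m t := by
  classical
  simp only [cnt]
  congr 1
  apply Finset.filter_congr
  intro x _
  constructor
  · rintro ⟨h, hx⟩
    refine ⟨h, ?_⟩
    simp only [Aset, Set.mem_setOf_eq] at hx ⊢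
    rcases Nat.lt_succ_iff_lt_or_eq.mp hx with h' | h'
    · exact h'
    · exfalso
      have : σ.symm (⟨m, h⟩, x) = ⟨t, ht⟩ := Fin.ext h'
      have := congrArg σ this
      rw [Equiv.apply_symm_apply] at this
      apply hm
      rw [← this]
  · rintro ⟨h, hx⟩
    exact ⟨h, Aset_mono σ (Nat.le_succ t) hx⟩

lemma cnt_step_le (t m : ℕ) : cnt σ m (t+1) ≤ cnt σ m t + 1 := by
  classical
  by_cases ht : t < nn r
  · have hsub : (Finset.univ.filter (fun x : Fin (2*r) => inA σ m x (t+1))) ⊆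
        insert (σ ⟨t, ht⟩).2 (Finset.univ.filter (fun x : Fin (2*r) => inA σ m x t)) := by
      intro x hx
      simp only [Finset.mem_filter] at hx
      obtain ⟨-, h, hx⟩ := hx
      simp only [Aset, Set.mem_setOf_eq] at hx
      rcases Nat.lt_succ_iff_lt_or_eq.mp hx with h' | h'
      · exact Finset.mem_insert_of_mem (by simp only [Finset.mem_filter]; exact ⟨Finset.mem_univ x, h, h'⟩)
      · have : σ.symm (⟨m, h⟩, x) = ⟨t, ht⟩ := Fin.ext h'
        have := congrArg σ this
        rw [Equiv.apply_symm_apply] at this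
        have hx2 : (σ ⟨t, ht⟩).2 = x := by rw [← this]
        exact hx2 ▸ Finset.mem_insert_self _ _
    calc cnt σ m (t+1) ≤ _ := Finset.card_le_card hsub
    _ ≤ _ + 1 := Finset.card_insert_le _ _
  · have hle : nn r ≤ t := by omega
    have : cnt σ m (t+1) = cnt σ m t := by
      simp only [cnt]
      congr 1
      apply Finset.filter_congr
      intro x _
      constructor
      · rintro ⟨h, hx⟩
        exact ⟨h, lt_of_lt_of_le (Fin.is_lt (σ.symm (⟨m,h⟩,x))) hle⟩
      · rintro ⟨h, hx⟩
        exact ⟨h, Aset_mono σ (Nat.le_succ t) hx⟩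
    omega

/-- a cut matching at time `t` whose endpoints have tree-node coordinates satisfying `P` -/
def CM (t : ℕ) (P : ℕ → Prop) (s : ℕ) : Prop :=
  ∃ a b : Fin s → Vt r, Function.Injective a ∧ Function.Injective b ∧
    ∀ i, a i ∈ Aset σ t ∧ b i ∉ Aset σ t ∧ (Gr r).Adj (a i) (b i) ∧
      P ((a i).1 : ℕ) ∧ P ((b i).1 : ℕ)

lemma CM_zero (t : ℕ) (P : ℕ → Prop) : CM σ t P 0 :=
  ⟨Fin.elim0, Fin.elim0, fun i => i.elim0, fun i => i.elim0, fun i => i.elim0⟩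

lemma CM_mono_size {t s s' : ℕ} {P : ℕ → Prop} (h : s ≤ s') (hc : CM σ t P s') : CM σ t P s := by
  obtain ⟨a, b, ha, hb, hp⟩ := hc
  exact ⟨a ∘ Fin.castLE h, b ∘ Fin.castLE h,
    ha.comp (Fin.castLE_injective h), hb.comp (Fin.castLE_injective h), fun i => hp _⟩

lemma CM_mono_pred {t s : ℕ} {P Q : ℕ → Prop} (h : ∀ x, P x → Q x) (hc : CM σ t P s) :
    CM σ t Q s := by
  obtain ⟨a, b, ha, hb, hp⟩ := hc
  exact ⟨a, b, ha, hb, fun i => ⟨(hp i).1, (hp i).2.1, (hp i).2.2.1,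
    h _ (hp i).2.2.2.1, h _ (hp i).2.2.2.2⟩⟩

lemma CM_union {t s₁ s₂ : ℕ} {P Q : ℕ → Prop} (h₁ : CM σ t P s₁) (h₂ : CM σ t Q s₂)
    (hdisj : ∀ x, P x → Q x → False) : CM σ t (fun x => P x ∨ Q x) (s₁ + s₂) := by
  obtain ⟨a₁, b₁, ha₁, hb₁, hp₁⟩ := h₁
  obtain ⟨a₂, b₂, ha₂, hb₂, hp₂⟩ := h₂
  classical
  refine ⟨fun i => if h : (i : ℕ) < s₁ then a₁ ⟨i, h⟩ else a₂ ⟨(i : ℕ) - s₁, by omega⟩,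
    fun i => if h : (i : ℕ) < s₁ then b₁ ⟨i, h⟩ else b₂ ⟨(i : ℕ) - s₁, by omega⟩, ?_, ?_, ?_⟩
  · intro i j hij
    by_cases hi : (i : ℕ) < s₁ <;> by_cases hj : (j : ℕ) < s₁ <;>
      simp only [hi, hj, dif_pos, dif_neg, not_false_iff] at hij
    · have := ha₁ hij; apply Fin.ext; have := congrArg Fin.val this; simpa using this
    · exact absurd ((hp₂ _).2.2.2.1) (fun hq => hdisj _ (hij ▸ (hp₁ _).2.2.2.1) hq)
    · exact absurd ((hp₂ _).2.2.2.1) (fun hq => hdisj _ (hij ▸ (hp₁ _).2.2.2.1) hq)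
    · have := ha₂ hij; apply Fin.ext; have := congrArg Fin.val this; simp at this; omega
  · intro i j hij
    by_cases hi : (i : ℕ) < s₁ <;> by_cases hj : (j : ℕ) < s₁ <;>
      simp only [hi, hj, dif_pos, dif_neg, not_false_iff] at hij
    · have := hb₁ hij; apply Fin.ext; have := congrArg Fin.val this; simpa using this
    · exact absurd ((hp₂ _).2.2.2.2) (fun hq => hdisj _ (hij ▸ (hp₁ _).2.2.2.2) hq)
    · exact absurd ((hp₂ _).2.2.2.2) (fun hq => hdisj _ (hij ▸ (hp₁ _).2.2.2.2) hq)
    · have := hb₂ hij; apply Fin.ext; have := congrArg Fin.val this; simp at this; omega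
  · intro i
    by_cases hi : (i : ℕ) < s₁ <;>
      simp only [hi, dif_pos, dif_neg, not_false_iff]
    · exact ⟨(hp₁ _).1, (hp₁ _).2.1, (hp₁ _).2.2.1, Or.inl (hp₁ _).2.2.2.1,
        Or.inl (hp₁ _).2.2.2.2⟩
    · exact ⟨(hp₂ _).1, (hp₂ _).2.1, (hp₂ _).2.2.1, Or.inr (hp₂ _).2.2.2.1,
        Or.inr (hp₂ _).2.2.2.2⟩

lemma CM_of_finset {t s : ℕ} {P : ℕ → Prop} {ι : Type} (F : Finset ι)
    (f g : ι → Vt r) (hf : Set.InjOn f F) (hg : Set.InjOn g F)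
    (h : ∀ i ∈ F, f i ∈ Aset σ t ∧ g i ∉ Aset σ t ∧ (Gr r).Adj (f i) (g i) ∧
      P ((f i).1 : ℕ) ∧ P ((g i).1 : ℕ))
    (hcard : s = F.card) : CM σ t P s := by
  subst hcard
  refine ⟨fun k => f (F.equivFin.symm k), fun k => g (F.equivFin.symm k), ?_, ?_, ?_⟩
  · intro i j hij
    have := hf (F.equivFin.symm i).2 (F.equivFin.symm j).2 hij
    exact F.equivFin.symm.injective (Subtype.ext this)
  · intro i j hij
    have := hg (F.equivFin.symm i).2 (F.equivFin.symm j).2 hij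
    exact F.equivFin.symm.injective (Subtype.ext this)
  · intro i
    exact h _ (F.equivFin.symm i).2

lemma adjG {c : ℕ} (h1 : 1 ≤ c) (hc : c < 2^(r+1)-1) (x : Fin (2*r)) :
    (Gr r).Adj (⟨par c, lt_of_le_of_lt (par_le c) hc⟩, x) (⟨c, hc⟩, x) := by
  apply (SimpleGraph.boxProd_adj_left).mpr
  unfold completeBinaryTree
  rw [SimpleGraph.fromRel_adj]
  constructor
  · intro h
    have := congrArg Fin.val h
    simp only [Fin.val_mk] at this
    have := par_lt h1
    omega
  · left
    simp only [Fin.val_mk]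
    unfold par
    omega

lemma chain_not_Dq {m j g gq e1 e2 : ℕ} (h1 : par^[e1] m = g) (h2 : par^[e2] g = j)
    (hparg : par g ≤ 2*j+1) (hgge : 2*j+2 ≤ g)
    (hne : g ≠ gq) (hparq : par gq ≤ 2*j+1) (hqge : 2*j+2 ≤ gq)
    {i : ℕ} (hi : i ≤ e1 + e2) : ¬ D gq (par^[i] m) := by
  intro hD
  by_cases hc : i ≤ e1
  · exact D_disj hne hparg hparq hgge hqge (D_of_iter_le h1 hc) hD
  · have heq : par^[i] m = par^[i - e1] g := by
      rw [← h1, ← Function.iterate_add_apply, Nat.sub_add_cancel (by omega)]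
    have hle : par^[i - e1] g ≤ par g := iter_par_le_par (by omega) g
    have := D_le hD
    omega

lemma flip_edge (t : ℕ) (x : Fin (2*r)) {j g gq m : ℕ} (hm : m < 2^(r+1)-1)
    (e1 e2 : ℕ) (h1 : par^[e1] m = g) (h2 : par^[e2] g = j)
    (hparg : par g ≤ 2*j+1) (hgge : 2*j+2 ≤ g)
    (hne : g ≠ gq) (hparq : par gq ≤ 2*j+1) (hqge : 2*j+2 ≤ gq)
    (horient : (inA σ m x t ∧ ¬ inA σ j x t) ∨ (¬ inA σ m x t ∧ inA σ j x t)) :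
    ∃ p q : Vt r, p.2 = x ∧ q.2 = x ∧ p ∈ Aset σ t ∧ q ∉ Aset σ t ∧ (Gr r).Adj p q ∧
      D j ((p.1 : ℕ)) ∧ D j ((q.1 : ℕ)) ∧ ¬ D gq ((p.1 : ℕ)) ∧ ¬ D gq ((q.1 : ℕ)) := by
  have he : par^[e2 + e1] m = j := by
    rw [Function.iterate_add_apply, h1, h2]
  have hDj : ∀ i ≤ e2 + e1, D j (par^[i] m) := fun i hi => D_of_iter_le he hi
  have hnotq : ∀ i ≤ e1 + e2, ¬ D gq (par^[i] m) :=
    fun i hi => chain_not_Dq h1 h2 hparg hgge hne hparq hqge hi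
  rcases horient with ⟨hPm, hPj⟩ | ⟨hPm, hPj⟩
  · obtain ⟨k, hk, hky, hkz⟩ := flip_exists (fun n => inA σ n x t) (e2+e1) m hPm (by rwa [he])
    have hylt : par^[k] m < 2^(r+1)-1 := lt_of_le_of_lt (iter_par_le _ m) hm
    have hzlt : par^[k+1] m < 2^(r+1)-1 := lt_of_le_of_lt (iter_par_le _ m) hm
    have hpz : par^[k+1] m = par (par^[k] m) := by rw [Function.iterate_succ_apply']
    have hy1 : 1 ≤ par^[k] m := by
      by_contra hc
      have hy0 : par^[k] m = 0 := by omega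
      have hz0 : par^[k+1] m = 0 := by rw [hpz, hy0]; simp [par]
      rw [hz0] at hkz
      rw [hy0] at hky
      exact hkz hky
    obtain ⟨hylt', hymem⟩ := hky
    have hymem' : ((⟨par^[k] m, hylt⟩ : Fin (2^(r+1)-1)), x) ∈ Aset σ t := by
      have : (⟨par^[k] m, hylt'⟩ : Fin (2^(r+1)-1)) = ⟨par^[k] m, hylt⟩ := rfl
      rwa [this] at hymem
    refine ⟨(⟨par^[k] m, hylt⟩, x), (⟨par^[k+1] m, hzlt⟩, x), rfl, rfl, hymem', ?_, ?_, ?_, ?_, ?_, ?_⟩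
    · intro hmem
      exact hkz ⟨hzlt, hmem⟩
    · have := adjG (r := r) hy1 hylt x
      have hpe : (⟨par^[k+1] m, hzlt⟩ : Fin (2^(r+1)-1)) = ⟨par (par^[k] m), lt_of_le_of_lt (par_le _) hylt⟩ := by
        apply Fin.ext; simp [hpz]
      rw [hpe]
      exact this.symm
    · exact hDj k (by omega)
    · exact hDj (k+1) (by omega)
    · exact hnotq k (by omega)
    · exact hnotq (k+1) (by omega)
  · obtain ⟨k, hk, hky, hkz⟩ := flip_exists (fun n => ¬ inA σ n x t) (e2+e1) m hPm
      (by rw [he]; exact fun hc => hc hPj)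
    rw [not_not] at hkz
    have hylt : par^[k] m < 2^(r+1)-1 := lt_of_le_of_lt (iter_par_le _ m) hm
    have hpz : par^[k+1] m = par (par^[k] m) := by rw [Function.iterate_succ_apply']
    have hy1 : 1 ≤ par^[k] m := by
      by_contra hc
      have hy0 : par^[k] m = 0 := by omega
      have hz0 : par^[k+1] m = 0 := by rw [hpz, hy0]; simp [par]
      rw [hz0] at hkz
      rw [hy0] at hky
      exact hky hkz
    obtain ⟨hzlt, hzmem⟩ := hkz
    refine ⟨(⟨par^[k+1] m, hzlt⟩, x), (⟨par^[k] m, hylt⟩, x), rfl, rfl, hzmem, ?_, ?_, ?_, ?_, ?_, ?_⟩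
    · intro hmem
      exact hky ⟨hylt, hmem⟩
    · have := adjG (r := r) hy1 hylt x
      have hpe : (⟨par^[k+1] m, hzlt⟩ : Fin (2^(r+1)-1)) = ⟨par (par^[k] m), lt_of_le_of_lt (par_le _) hylt⟩ := by
        apply Fin.ext; simp [hpz]
      rw [hpe]
      exact this
    · exact hDj (k+1) (by omega)
    · exact hDj k (by omega)
    · exact hnotq (k+1) (by omega)
    · exact hnotq k (by omega)

lemma combine {j gA gC gB s tS : ℕ}
    (hAj : D j gA) (hCj : D j gC) (hBj : D j gB)
    (hparA : par gA ≤ 2*j+1) (hparB : par gB ≤ 2*j+1)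
    (hgeA : 2*j+2 ≤ gA) (hgeB : 2*j+2 ≤ gB) (hgeC : 2*j+2 ≤ gC)
    (hparC : par gC ≤ 2*j+1)
    (hneAC : gA ≠ gC) (hneBC : gB ≠ gC)
    (hCM : CM σ tS (D gC) s)
    {w : ℕ} (hw : w < 2^(r+1)-1) (hDw : D gA w) (hcw : r+1 ≤ cnt σ w tS)
    {v : ℕ} (hv : v < 2^(r+1)-1) (hDv : D gB v) (hcv : cnt σ v tS = 0) :
    CM σ tS (D j) (s + (r+1)) := by
  classical
  obtain ⟨eA, heA⟩ := hDw
  obtain ⟨eA2, heA2⟩ := hAj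
  obtain ⟨eB, heB⟩ := hDv
  obtain ⟨eB2, heB2⟩ := hBj
  set C : Finset (Fin (2*r)) := Finset.univ.filter (fun x => inA σ w x tS) with hC
  have hCcard : r + 1 ≤ C.card := hcw
  obtain ⟨C', hC'sub, hC'card⟩ := Finset.exists_subset_card_eq hCcard
  have key : ∀ x : Fin (2*r), x ∈ C' → ∃ p q : Vt r, p.2 = x ∧ q.2 = x ∧
      p ∈ Aset σ tS ∧ q ∉ Aset σ tS ∧ (Gr r).Adj p q ∧
      D j ((p.1 : ℕ)) ∧ D j ((q.1 : ℕ)) ∧ ¬ D gC ((p.1 : ℕ)) ∧ ¬ D gC ((q.1 : ℕ)) := by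
    intro x hx
    by_cases hj : inA σ j x tS
    · refine flip_edge σ tS x hv eB eB2 heB heB2 hparB hgeB hneBC hparC hgeC (Or.inr ⟨?_, hj⟩)
      exact (cnt_eq_zero_iff σ v tS).mp hcv x
    · refine flip_edge σ tS x hw eA eA2 heA heA2 hparA hgeA hneAC hparC hgeC (Or.inl ⟨?_, hj⟩)
      have := hC'sub hx
      rw [hC, Finset.mem_filter] at this
      exact this.2
  choose p q hp1 hq1 hp2 hq2 hadj hpj hqj hpc hqc using key
  have hCMnew : CM σ tS (fun n => D j n ∧ ¬ D gC n) (r+1) := by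
    apply CM_of_finset σ C'.attach (fun u => p u.1 u.2) (fun u => q u.1 u.2)
    · intro a _ b _ hab
      apply Subtype.ext
      have h1 : (p a.1 a.2).2 = a.1 := hp1 a.1 a.2
      have h2 : (p b.1 b.2).2 = b.1 := hp1 b.1 b.2
      rw [← h1, ← h2]
      exact congrArg Prod.snd hab
    · intro a _ b _ hab
      apply Subtype.ext
      have h1 : (q a.1 a.2).2 = a.1 := hq1 a.1 a.2
      have h2 : (q b.1 b.2).2 = b.1 := hq1 b.1 b.2
      rw [← h1, ← h2]
      exact congrArg Prod.snd hab
    · intro u _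
      exact ⟨hp2 u.1 u.2, hq2 u.1 u.2, hadj u.1 u.2, ⟨hpj u.1 u.2, hpc u.1 u.2⟩,
        ⟨hqj u.1 u.2, hqc u.1 u.2⟩⟩
    · rw [Finset.card_attach, hC'card]
  have := CM_union σ hCM hCMnew (fun x hx hx' => hx'.2 hx)
  exact CM_mono_pred σ (fun x hx => hx.elim (fun h => D_trans hCj h) (fun h => h.1)) this

lemma sum_two_pow (m : ℕ) : ∑ e ∈ Finset.range m, 2^e = 2^m - 1 := by
  induction m with
  | zero => simp
  | succ m ih =>
    rw [Finset.sum_range_succ, ih]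
    have : 2^(m+1) = 2 * 2^m := by rw [pow_succ]; ring
    have h1 : 1 ≤ 2^m := Nat.one_le_two_pow
    omega

lemma par_pow (e : ℕ) : ∀ o j : ℕ, o < 2^e → par^[e] ((j+1)*2^e - 1 + o) = j := by
  induction e with
  | zero => intro o j ho; interval_cases o <;> simp
  | succ e ih =>
    intro o j ho
    rw [Function.iterate_succ_apply]
    have h2e : (j+1)*2^(e+1) = 2*((j+1)*2^e) := by rw [pow_succ]; ring
    have h1 : 1 ≤ (j+1)*2^e := Nat.one_le_iff_ne_zero.mpr (by positivity)
    have h2e' : (2:ℕ)^(e+1) = 2*2^e := by rw [pow_succ]; ring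
    have hpar : par ((j+1)*2^(e+1) - 1 + o) = (j+1)*2^e - 1 + o/2 := by
      unfold par; omega
    rw [hpar]
    exact ih (o/2) j (by omega)

/-- height of base subtrees -/
def h0 (r : ℕ) : ℕ := 2 * Nat.log 2 r + 8 + r % 2

def Theta (r : ℕ) : ℕ := 2^(h0 r + 1) - 1

/-- the base subtree below j : all descendants within relative depth h0 -/
def Fbase (r j : ℕ) : Finset ℕ :=
  (Finset.range (h0 r + 1)).biUnion (fun e => (Finset.range (2^e)).image (fun o => (j+1)*2^e - 1 + o))

lemma mem_Fbase {r j x : ℕ} :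
    x ∈ Fbase r j ↔ ∃ e ≤ h0 r, ∃ o < 2^e, x = (j+1)*2^e - 1 + o := by
  simp only [Fbase, Finset.mem_biUnion, Finset.mem_range, Finset.mem_image]
  constructor
  · rintro ⟨e, he, o, ho, rfl⟩
    exact ⟨e, by omega, o, ho, rfl⟩
  · rintro ⟨e, he, o, ho, rfl⟩
    exact ⟨e, by omega, o, ho, rfl⟩

lemma Fbase_D {r j x : ℕ} (h : x ∈ Fbase r j) : D j x := by
  obtain ⟨e, he, o, ho, rfl⟩ := mem_Fbase.mp h
  exact ⟨e, par_pow e o j ho⟩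

lemma self_mem_Fbase (r j : ℕ) : j ∈ Fbase r j := by
  rw [mem_Fbase]
  exact ⟨0, by omega, 0, by simp, by simp⟩

lemma Fbase_lt {r j x : ℕ} (hfit : (j+2) * 2^(h0 r) ≤ 2^(r+1)) (h : x ∈ Fbase r j) :
    x < 2^(r+1) - 1 := by
  obtain ⟨e, he, o, ho, rfl⟩ := mem_Fbase.mp h
  have h1 : (j+1)*2^e - 1 + o ≤ (j+2)*2^e - 2 := by
    have : 1 ≤ (j+1)*2^e := Nat.one_le_iff_ne_zero.mpr (by positivity)
    have h2 : (j+2)*2^e = (j+1)*2^e + 2^e := by ring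
    omega
  have h2 : (j+2)*2^e ≤ (j+2)*2^(h0 r) :=
    Nat.mul_le_mul_left _ (Nat.pow_le_pow_right (by norm_num) he)
  have h3 : (2:ℕ) ≤ 2^(r+1) := by
    calc (2:ℕ) = 2^1 := by norm_num
    _ ≤ 2^(r+1) := Nat.pow_le_pow_right (by norm_num) (by omega)
  have h4 : (1:ℕ) ≤ 2^(h0 r) := Nat.one_le_two_pow
  have h5 : (j+2)*1 ≤ (j+2)*2^(h0 r) := Nat.mul_le_mul_left _ h4
  omega

lemma Fbase_card (r j : ℕ) : (Fbase r j).card = 2^(h0 r + 1) - 1 := by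
  rw [Fbase, Finset.card_biUnion, ← sum_two_pow]
  · apply Finset.sum_congr rfl
    intro e _
    rw [Finset.card_image_of_injOn, Finset.card_range]
    intro a ha b hb hab
    have hab' : (j+1)*2^e - 1 + a = (j+1)*2^e - 1 + b := hab
    have : 1 ≤ (j+1)*2^e := Nat.one_le_iff_ne_zero.mpr (by positivity)
    omega
  · intro e _ e' _ hne
    apply Finset.disjoint_left.mpr
    intro x hx hx'
    simp only [Finset.mem_image, Finset.mem_range] at hx hx'
    obtain ⟨o, ho, rfl⟩ := hx
    obtain ⟨o', ho', heq⟩ := hx'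
    have key : ∀ a b oa ob : ℕ, a < b → oa < 2^a → ob < 2^b →
        (j+1)*2^a - 1 + oa = (j+1)*2^b - 1 + ob → False := by
      intro a b oa ob hab hoa hob heq
      have h1 : 2*2^a ≤ 2^b := by
        calc 2*2^a = 2^(a+1) := by rw [pow_succ]; ring
        _ ≤ 2^b := Nat.pow_le_pow_right (by norm_num) (by omega)
      have h2 : 1 ≤ (j+1)*2^a := Nat.one_le_iff_ne_zero.mpr (by positivity)
      have h2b : 1 ≤ (j+1)*2^b := Nat.one_le_iff_ne_zero.mpr (by positivity)
      have hB : (j+1)*(2*2^a) ≤ (j+1)*2^b := Nat.mul_le_mul_left _ h1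
      have hBe : (j+1)*(2*2^a) = 2*((j+1)*2^a) := by ring
      have hA2 : 2^a ≤ (j+1)*2^a := Nat.le_mul_of_pos_left _ (by omega)
      omega
    rcases lt_trichotomy e e' with h | h | h
    · exact key e e' o o' h ho ho' heq.symm
    · exact hne h
    · exact key e' e o' o h ho' ho heq

lemma split_edge {u : ℕ} (hu : u < 2^(r+1)-1) (t : ℕ) (h1 : 1 ≤ cnt σ u t)
    (h2 : cnt σ u t < 2*r) :
    ∃ p q : Vt r, ((p.1 : ℕ)) = u ∧ ((q.1 : ℕ)) = u ∧ p ∈ Aset σ t ∧ q ∉ Aset σ t ∧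
      (Gr r).Adj p q := by
  obtain ⟨x, hx⟩ := (cnt_pos_iff σ u t).mp h1
  obtain ⟨x', hx'⟩ := cnt_lt_all σ u t h2
  set Q : ℕ → Prop := fun k => ∃ hk : k < 2*r, inA σ u ⟨k, hk⟩ t with hQ
  have hQx : Q x.1 := ⟨x.2, by convert hx⟩
  have hQx' : ¬ Q x'.1 := by
    rintro ⟨hk, hin⟩
    exact hx' (by convert hin)
  have hne : x.1 ≠ x'.1 := fun h => hQx' (h ▸ hQx)
  rcases lt_or_gt_of_ne hne with hlt | hgt
  · obtain ⟨k, hk1, hk2, hk3, hk4⟩ := natflip Q (x'.1 - x.1) x.1 hQx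
      (by rw [show x.1 + (x'.1 - x.1) = x'.1 by omega]; exact hQx')
    have hk2r : k + 1 < 2*r := by omega
    obtain ⟨hklt, hkin⟩ := hk3
    refine ⟨(⟨u, hu⟩, ⟨k, hklt⟩), (⟨u, hu⟩, ⟨k+1, hk2r⟩), rfl, rfl, ?_, ?_, ?_⟩
    · exact hkin.2
    · intro hmem
      exact hk4 ⟨hk2r, hu, hmem⟩
    · apply SimpleGraph.boxProd_adj_right.mpr
      rw [SimpleGraph.pathGraph_adj]
      left; simp
  · obtain ⟨k, hk1, hk2, hk3, hk4⟩ := natflip (fun n => ¬ Q n) (x.1 - x'.1) x'.1 hQx'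
      (by rw [show x'.1 + (x.1 - x'.1) = x.1 by omega]; exact not_not_intro hQx)
    rw [not_not] at hk4
    have hk2r : k + 1 < 2*r := by omega
    have hklt : k < 2*r := by omega
    obtain ⟨hk1', hkin⟩ := hk4
    refine ⟨(⟨u, hu⟩, ⟨k+1, hk2r⟩), (⟨u, hu⟩, ⟨k, hklt⟩), rfl, rfl, ?_, ?_, ?_⟩
    · exact hkin.2
    · intro hmem
      exact hk3 ⟨hklt, hu, hmem⟩
    · apply SimpleGraph.boxProd_adj_right.mpr
      rw [SimpleGraph.pathGraph_adj]
      right; simp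

def Good (j s : ℕ) : Prop := ∃ t, t ≤ nn r ∧ CM σ t (D j) s ∧
  (∃ w, w < 2^(r+1)-1 ∧ D j w ∧ r+1 ≤ cnt σ w t) ∧
  (∃ v, v < 2^(r+1)-1 ∧ D j v ∧ cnt σ v t = 0)

def Big (j : ℕ) : Prop := ∃ t, t ≤ nn r ∧ CM σ t (D j) (Theta r)

lemma base (hr : 2 ≤ r) (j : ℕ) (hfit : (j+2) * 2^(h0 r) ≤ 2^(r+1)) :
    Good σ j 0 ∨ Big σ j := by
  classical
  have hjlt : j < 2^(r+1) - 1 := Fbase_lt hfit (self_mem_Fbase r j)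
  have hex : ∃ t, ∃ u ∈ Fbase r j, r+1 ≤ cnt σ u t := by
    refine ⟨nn r, j, self_mem_Fbase r j, ?_⟩
    rw [cnt_full σ hjlt (le_refl _)]
    omega
  set τ := Nat.find hex with hτdef
  obtain ⟨ustar, hustarF, hustarc⟩ := Nat.find_spec hex
  have hτle : τ ≤ nn r := Nat.find_le ⟨j, self_mem_Fbase r j, by rw [cnt_full σ hjlt (le_refl _)]; omega⟩
  have hτpos : 1 ≤ τ := by
    rcases Nat.eq_zero_or_pos τ with h | h
    · exfalso
      obtain ⟨u, _, hu⟩ := Nat.find_spec hex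
      rw [← hτdef, h, cnt_zero] at hu
      omega
    · exact h
  have ht0 : τ - 1 < nn r := by omega
  have hprev : ∀ u ∈ Fbase r j, cnt σ u (τ-1) ≤ r := by
    intro u hu
    by_contra hc
    exact Nat.find_min hex (show τ - 1 < τ by omega) ⟨u, hu, by omega⟩
  have hτeq : τ - 1 + 1 = τ := by omega
  have hub : ∀ u ∈ Fbase r j, cnt σ u τ ≤ r+1 := by
    intro u hu
    by_cases hw0 : u = ((σ ⟨τ-1, ht0⟩).1 : ℕ)
    · have := cnt_step_le σ (τ-1) u
      rw [hτeq] at this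
      have := hprev u hu
      omega
    · have := cnt_step_ne σ (τ-1) ht0 u hw0
      rw [hτeq] at this
      rw [this]
      have := hprev u hu
      omega
  by_cases hlow : ∃ v ∈ Fbase r j, cnt σ v τ = 0
  · left
    obtain ⟨v, hvF, hv0⟩ := hlow
    exact ⟨τ, hτle, CM_zero σ τ _,
      ⟨ustar, Fbase_lt hfit hustarF, Fbase_D hustarF, hustarc⟩,
      ⟨v, Fbase_lt hfit hvF, Fbase_D hvF, hv0⟩⟩
  · right
    push_neg at hlow
    have key : ∀ u : {x // x ∈ Fbase r j}, ∃ p q : Vt r, ((p.1 : ℕ)) = u.1 ∧ ((q.1 : ℕ)) = u.1 ∧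
        p ∈ Aset σ τ ∧ q ∉ Aset σ τ ∧ (Gr r).Adj p q := by
      intro u
      apply split_edge σ (Fbase_lt hfit u.2) τ
      · have := hlow u.1 u.2
        omega
      · have := hub u.1 u.2
        omega
    choose p q hp1 hq1 hp2 hq2 hadj using key
    refine ⟨τ, hτle, ?_⟩
    apply CM_of_finset σ ((Fbase r j).attach) p q
    · intro a _ b _ hab
      apply Subtype.ext
      rw [← hp1 a, ← hp1 b, hab]
    · intro a _ b _ hab
      apply Subtype.ext
      rw [← hq1 a, ← hq1 b, hab]
    · intro u _
      refine ⟨hp2 u, hq2 u, hadj u, ?_, ?_⟩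
      · rw [hp1 u]; exact Fbase_D u.2
      · rw [hq1 u]; exact Fbase_D u.2
    · rw [Finset.card_attach, Fbase_card, Theta]

lemma step_core {j gA gC gB s tA tC tB : ℕ}
    (hAj : D j gA) (hCj : D j gC) (hBj : D j gB)
    (hparA : par gA ≤ 2*j+1) (hparB : par gB ≤ 2*j+1) (hparC : par gC ≤ 2*j+1)
    (hgeA : 2*j+2 ≤ gA) (hgeB : 2*j+2 ≤ gB) (hgeC : 2*j+2 ≤ gC)
    (hneAC : gA ≠ gC) (hneBC : gB ≠ gC)
    (hts1 : tA ≤ tC) (hts2 : tC ≤ tB) (htCn : tC ≤ nn r)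
    (hcm : CM σ tC (D gC) s)
    {w : ℕ} (hw : w < 2^(r+1)-1) (hDw : D gA w) (hcw : r+1 ≤ cnt σ w tA)
    {v : ℕ} (hv : v < 2^(r+1)-1) (hDv : D gB v) (hcv : cnt σ v tB = 0) :
    Good σ j (s + (r+1)) := by
  have hcwC : r+1 ≤ cnt σ w tC := le_trans hcw (cnt_mono σ w hts1)
  have hcvC : cnt σ v tC = 0 := by
    have := cnt_mono σ v hts2
    omega
  refine ⟨tC, htCn, ?_, ⟨w, hw, D_trans hAj hDw, hcwC⟩, ⟨v, hv, D_trans hBj hDv, hcvC⟩⟩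
  exact combine σ hAj hCj hBj hparA hparB hgeA hgeB hgeC hparC hneAC hneBC hcm hw hDw hcwC
    hv hDv hcvC

lemma main_induction (hr : 2 ≤ r) : ∀ m : ℕ, ∀ j, (j+2) * 2^(2*m + h0 r) ≤ 2^(r+1) →
    Good σ j (m*(r+1)) ∨ Big σ j := by
  intro m
  induction m with
  | zero =>
    intro j hfit
    simpa using base σ hr j (by simpa using hfit)
  | succ m ih =>
    intro j hfit
    have hpow : (2:ℕ)^(2*(m+1) + h0 r) = 4 * 2^(2*m + h0 r) := by
      rw [show 2*(m+1) + h0 r = (2*m + h0 r) + 2 by ring, pow_add]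
      ring
    rw [hpow] at hfit
    have fitgen : ∀ g : ℕ, g + 2 ≤ 4*(j+2) → (g+2) * 2^(2*m + h0 r) ≤ 2^(r+1) := by
      intro g hg
      calc (g+2)*2^(2*m + h0 r) ≤ (4*(j+2))*2^(2*m + h0 r) := Nat.mul_le_mul_right _ hg
      _ = (j+2)*(4*2^(2*m + h0 r)) := by ring
      _ ≤ 2^(r+1) := hfit
    have hpar1 : par (4*j+3) = 2*j+1 := by unfold par; omega
    have hpar2 : par (4*j+4) = 2*j+1 := by unfold par; omega
    have hpar3 : par (2*j+2) = j := by unfold par; omega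
    have hparc : par (2*j+1) = j := by unfold par; omega
    have hDj1 : D j (4*j+3) := ⟨2, by
      rw [show (2:ℕ) = 1 + 1 by rfl, Function.iterate_add_apply]
      simp only [Function.iterate_one]
      rw [hpar1, hparc]⟩
    have hDj2 : D j (4*j+4) := ⟨2, by
      rw [show (2:ℕ) = 1 + 1 by rfl, Function.iterate_add_apply]
      simp only [Function.iterate_one]
      rw [hpar2, hparc]⟩
    have hDj3 : D j (2*j+2) := ⟨1, by simp only [Function.iterate_one]; exact hpar3⟩
    rcases ih (4*j+3) (fitgen _ (by omega)) with G1 | B1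
    rcases ih (4*j+4) (fitgen _ (by omega)) with G2 | B2
    rcases ih (2*j+2) (fitgen _ (by omega)) with G3 | B3
    · -- three Goods
      obtain ⟨t1, hn1, cm1, ⟨w1, hw1, hDw1, hcw1⟩, ⟨v1, hv1, hDv1, hcv1⟩⟩ := G1
      obtain ⟨t2, hn2, cm2, ⟨w2, hw2, hDw2, hcw2⟩, ⟨v2, hv2, hDv2, hcv2⟩⟩ := G2
      obtain ⟨t3, hn3, cm3, ⟨w3, hw3, hDw3, hcw3⟩, ⟨v3, hv3, hDv3, hcv3⟩⟩ := G3
      left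
      rw [show (m+1)*(r+1) = m*(r+1) + (r+1) by ring]
      rcases le_total t1 t2 with h12 | h21
      · rcases le_total t2 t3 with h23 | h32
        · exact step_core σ hDj1 hDj2 hDj3 (le_of_eq hpar1) (by omega) (le_of_eq hpar2)
            (by omega) (by omega) (by omega) (by omega) (by omega) h12 h23 hn2 cm2
            hw1 hDw1 hcw1 hv3 hDv3 hcv3
        · rcases le_total t1 t3 with h13 | h31
          · exact step_core σ hDj1 hDj3 hDj2 (le_of_eq hpar1) (by omega) (by omega)
              (by omega) (by omega) (by omega) (by omega) (by omega) h13 h32 hn3 cm3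
              hw1 hDw1 hcw1 hv2 hDv2 hcv2
          · exact step_core σ hDj3 hDj1 hDj2 (by omega) (by omega) (le_of_eq hpar1)
              (by omega) (by omega) (by omega) (by omega) (by omega) h31 h12 hn1 cm1
              hw3 hDw3 hcw3 hv2 hDv2 hcv2
      · rcases le_total t1 t3 with h13 | h31
        · exact step_core σ hDj2 hDj1 hDj3 (le_of_eq hpar2) (by omega) (le_of_eq hpar1)
            (by omega) (by omega) (by omega) (by omega) (by omega) h21 h13 hn1 cm1
            hw2 hDw2 hcw2 hv3 hDv3 hcv3
        · rcases le_total t2 t3 with h23 | h32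
          · exact step_core σ hDj2 hDj3 hDj1 (le_of_eq hpar2) (le_of_eq hpar1) (by omega)
              (by omega) (by omega) (by omega) (by omega) (by omega) h23 h31 hn3 cm3
              hw2 hDw2 hcw2 hv1 hDv1 hcv1
          · exact step_core σ hDj3 hDj2 hDj1 (by omega) (le_of_eq hpar1) (le_of_eq hpar2)
              (by omega) (by omega) (by omega) (by omega) (by omega) h32 h21 hn2 cm2
              hw3 hDw3 hcw3 hv1 hDv1 hcv1
    · right
      obtain ⟨t, htn, cm⟩ := B3
      exact ⟨t, htn, CM_mono_pred σ (fun x hx => D_trans hDj3 hx) cm⟩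
    · right
      obtain ⟨t, htn, cm⟩ := B2
      exact ⟨t, htn, CM_mono_pred σ (fun x hx => D_trans hDj2 hx) cm⟩
    · right
      obtain ⟨t, htn, cm⟩ := B1
      exact ⟨t, htn, CM_mono_pred σ (fun x hx => D_trans hDj1 hx) cm⟩

lemma pow_ge_64 : ∀ k : ℕ, 12 ≤ k → 64 * k ≤ 2^k := by
  intro k
  induction k with
  | zero => omega
  | succ k ih =>
    intro hk
    rcases Nat.lt_or_ge k 12 with h | h
    · have hk12 : k + 1 = 12 := by omega
      rw [hk12]
      norm_num
    · have h1 := ih h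
      have h2 : (2:ℕ)^12 ≤ 2^k := Nat.pow_le_pow_right (by norm_num) h
      have h3 : (2:ℕ)^(k+1) = 2*2^k := by rw [pow_succ]; ring
      norm_num at h2
      omega

lemma log_small {r : ℕ} (hr : 4096 ≤ r) : 64 * Nat.log 2 r ≤ r := by
  have h1 : (2:ℕ)^12 ≤ r := by norm_num; omega
  have h2 : 12 ≤ Nat.log 2 r := (Nat.le_log_iff_pow_le (by norm_num) (by omega)).mpr h1
  have h3 := pow_ge_64 (Nat.log 2 r) h2
  have h4 : (2:ℕ)^(Nat.log 2 r) ≤ r := Nat.pow_log_le_self 2 (by omega)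
  omega

lemma h0_le {r : ℕ} (hr : 4096 ≤ r) : h0 r ≤ 2 * Nat.log 2 r + 9 := by
  unfold h0; omega

lemma bound_good' {r : ℕ} (hr : 4096 ≤ r) :
    (r + Nat.log 2 r + 3)^2 ≤ 16 * (((r - h0 r)/2) * (r+1)) := by
  set k := Nat.log 2 r with hk
  have h64 : 64 * k ≤ r := log_small hr
  have hh0 : h0 r = 2*k + 8 + r % 2 := rfl
  set M := (r - h0 r)/2 with hM
  have hB : r ≤ 4*M := by omega
  have hA : r + k + 3 ≤ 2*r := by omega
  calc (r+k+3)^2 ≤ (2*r)^2 := Nat.pow_le_pow_left hA 2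
  _ = 4*(r*r) := by ring
  _ ≤ 4*((4*M)*r) := by
      have : r*r ≤ (4*M)*r := Nat.mul_le_mul_right r hB
      omega
  _ = 16*(M*r) := by ring
  _ ≤ 16*(M*(r+1)) := by
      have : M*r ≤ M*(r+1) := Nat.mul_le_mul_left M (by omega)
      omega

lemma bound_big {r : ℕ} (hr : 4096 ≤ r) :
    (r + Nat.log 2 r + 3)^2 ≤ 16 * Theta r := by
  set k := Nat.log 2 r with hk
  have h64 : 64 * k ≤ k + r := by have := log_small hr; omega
  have h1 : r < 2^(k + 1) := Nat.lt_pow_succ_log_self (by norm_num) r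
  have hh0 : h0 r = 2*k + 8 + r % 2 := rfl
  have h2 : (2:ℕ)^(2*k+9) ≤ 2^(h0 r + 1) := Nat.pow_le_pow_right (by norm_num) (by omega)
  have h3 : (2:ℕ)^(2*k+9) = 128 * ((2^(k+1))^2) := by
    rw [show 2*k+9 = 7 + (k+1)*2 by ring, pow_add, pow_mul]
    norm_num
  have h4 : (r+1)^2 ≤ (2^(k+1))^2 := Nat.pow_le_pow_left (by omega) 2
  have hA : (r+k+3)^2 ≤ 4*((r+1)^2) := by
    calc (r+k+3)^2 ≤ (2*(r+1))^2 := Nat.pow_le_pow_left (by have := log_small hr; omega) 2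
    _ = 4*((r+1)^2) := by ring
  have hX : 1 ≤ (r+1)^2 := Nat.one_le_iff_ne_zero.mpr (by positivity)
  have hT : Theta r = 2^(h0 r + 1) - 1 := rfl
  have hpos : 1 ≤ (2:ℕ)^(h0 r+1) := Nat.one_le_two_pow
  omega

/-- the number of tree nodes -/
lemma nn_le {r : ℕ} (hr : 1 ≤ r) : nn r ≤ 2^(r + Nat.log 2 r + 3) := by
  have hcard : nn r = (2^(r+1)-1)*(2*r) := by
    simp [nn, Vt]
  have h1 : r < 2^(Nat.log 2 r + 1) := Nat.lt_pow_succ_log_self (by norm_num) r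
  calc nn r = (2^(r+1)-1)*(2*r) := hcard
  _ ≤ 2^(r+1) * (2*r) := Nat.mul_le_mul_right (2*r) (Nat.sub_le _ _)
  _ ≤ 2^(r+1) * 2^(Nat.log 2 r + 2) := by
      have h2 : 2*r ≤ 2^(Nat.log 2 r + 2) := by
        have : (2:ℕ)^(Nat.log 2 r + 2) = 2*2^(Nat.log 2 r +1) := by rw [pow_succ]; ring
        omega
      exact Nat.mul_le_mul_left _ h2
  _ = 2^(r + Nat.log 2 r + 3) := by rw [← pow_add]; ring_nf

lemma nn_pos {r : ℕ} (hr : 1 ≤ r) : 1 ≤ nn r := by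
  have hcard : nn r = (2^(r+1)-1)*(2*r) := by simp [nn, Vt]
  have h2 : (2:ℕ) ≤ 2^(r+1) := by
    calc (2:ℕ) = 2^1 := by norm_num
    _ ≤ 2^(r+1) := Nat.pow_le_pow_right (by norm_num) (by omega)
  rw [hcard]
  have : 1 ≤ 2^(r+1)-1 := by omega
  nlinarith

/-- existence of a big cut matching, for an arbitrary ordering -/
lemma exists_big_cut {r : ℕ} (hr : 4096 ≤ r) (σ : Fin (nn r) ≃ Vt r) :
    ∃ t s : ℕ, t ≤ nn r ∧ (r + Nat.log 2 r + 3)^2 ≤ 16 * s ∧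
      HasCutMatching (Gr r) (Aset σ t) s := by
  have h64 : 64 * Nat.log 2 r ≤ r := log_small hr
  have hh0 : h0 r = 2*Nat.log 2 r + 8 + r % 2 := rfl
  set M := (r - h0 r)/2 with hM
  have heq : 2*M + h0 r = r := by omega
  have hfit : (0+2) * 2^(2*M + h0 r) ≤ 2^(r+1) := by
    rw [heq, pow_succ]
    omega
  rcases main_induction σ (by omega) M 0 hfit with hGood | hBig
  · obtain ⟨t, htn, cm, -, -⟩ := hGood
    obtain ⟨a, b, ha, hb, hab⟩ := cm
    exact ⟨t, M*(r+1), htn, bound_good' hr, a, b, ha, hb,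
      fun i => ⟨(hab i).1, (hab i).2.1, (hab i).2.2.1⟩⟩
  · obtain ⟨t, htn, cm⟩ := hBig
    obtain ⟨a, b, ha, hb, hab⟩ := cm
    exact ⟨t, Theta r, htn, bound_big hr, a, b, ha, hb,
      fun i => ⟨(hab i).1, (hab i).2.1, (hab i).2.2.1⟩⟩

theorem matchingWidth_tree_path_lb' :
    ∀ r : ℕ, 4096 ≤ r →
      (Real.logb 2 ((Fintype.card (Fin (2 ^ (r + 1) - 1) × Fin (2 * r)) : ℕ) : ℝ)) ^ 2 / 16 ≤
        (matchingWidth (completeBinaryTree r □ SimpleGraph.pathGraph (2 * r)) : ℝ) := by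
  intro r hr
  set L : ℕ := r + Nat.log 2 r + 3 with hLdef
  set G := completeBinaryTree r □ SimpleGraph.pathGraph (2 * r) with hG
  have keyNat : L^2 ≤ 16 * matchingWidth G := by
    have hne : Nonempty (Fin (Fintype.card (Vt r)) ≃ Vt r) := ⟨(Fintype.equivFin (Vt r)).symm⟩
    have hmw : matchingWidth G = sInf (Set.range (fun σ : Fin (Fintype.card (Vt r)) ≃ Vt r =>
        ⨆ i : Fin (Fintype.card (Vt r) + 1),
          sSup {t | HasCutMatching G {v | ((σ.symm v : Fin (Fintype.card (Vt r))) : ℕ) < (i : ℕ)} t})) := rfl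
    obtain ⟨σ₀, hσ₀⟩ := Nat.sInf_mem (Set.range_nonempty (h := hne) _)
    rw [hmw, hσ₀.symm] at *
    obtain ⟨t, s, htn, hbound, hcut⟩ := exists_big_cut hr σ₀
    have hi : t < Fintype.card (Vt r) + 1 := by
      have : nn r = Fintype.card (Vt r) := rfl
      omega
    set i : Fin (Fintype.card (Vt r) + 1) := ⟨t, hi⟩ with hidef
    have hmemS : s ∈ {u | HasCutMatching G
        {v | ((σ₀.symm v : Fin (Fintype.card (Vt r))) : ℕ) < (i : ℕ)} u} := hcut
    have hbdd : BddAbove {u | HasCutMatching G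
        {v | ((σ₀.symm v : Fin (Fintype.card (Vt r))) : ℕ) < (i : ℕ)} u} := by
      refine ⟨Fintype.card (Vt r), fun u hu => ?_⟩
      obtain ⟨a, b, ha, -, -⟩ := hu
      calc u = Fintype.card (Fin u) := (Fintype.card_fin u).symm
      _ ≤ Fintype.card (Vt r) := Fintype.card_le_of_injective a ha
    have h1 : s ≤ sSup {u | HasCutMatching G
        {v | ((σ₀.symm v : Fin (Fintype.card (Vt r))) : ℕ) < (i : ℕ)} u} := le_csSup hbdd hmemS
    have h2 : sSup {u | HasCutMatching G
          {v | ((σ₀.symm v : Fin (Fintype.card (Vt r))) : ℕ) < (i : ℕ)} u} ≤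
        ⨆ i' : Fin (Fintype.card (Vt r) + 1), sSup {u | HasCutMatching G
          {v | ((σ₀.symm v : Fin (Fintype.card (Vt r))) : ℕ) < (i' : ℕ)} u} :=
      le_ciSup (f := fun i' : Fin (Fintype.card (Vt r) + 1) => sSup {u | HasCutMatching G
          {v | ((σ₀.symm v : Fin (Fintype.card (Vt r))) : ℕ) < (i' : ℕ)} u})
        (Set.Finite.bddAbove (Set.finite_range _)) i
    calc L^2 ≤ 16 * s := hbound
    _ ≤ 16 * _ := Nat.mul_le_mul_left 16 (le_trans h1 h2)
  have hnn1 : 1 ≤ nn r := nn_pos (by omega)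
  have hnnR : (1:ℝ) ≤ (nn r : ℝ) := by exact_mod_cast hnn1
  have hlogb : Real.logb 2 ((nn r : ℕ) : ℝ) ≤ (L : ℝ) := by
    have hle : ((nn r : ℕ) : ℝ) ≤ (2:ℝ)^(L:ℕ) := by
      have h := nn_le (r := r) (by omega)
      calc ((nn r : ℕ) : ℝ) ≤ ((2^L : ℕ) : ℝ) := Nat.cast_le.mpr h
      _ = (2:ℝ)^(L:ℕ) := by push_cast; ring
    calc Real.logb 2 ((nn r : ℕ) : ℝ) ≤ Real.logb 2 ((2:ℝ)^(L:ℕ)) :=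
      Real.logb_le_logb_of_le one_lt_two (by linarith) hle
    _ = (L:ℝ) := by
      rw [Real.logb_pow, Real.logb_self_eq_one one_lt_two, mul_one]
  have hlogb0 : 0 ≤ Real.logb 2 ((nn r : ℕ) : ℝ) := Real.logb_nonneg one_lt_two hnnR
  have hsq : (Real.logb 2 ((nn r : ℕ) : ℝ))^2 ≤ ((L:ℝ))^2 := by
    apply pow_le_pow_left₀ hlogb0 hlogb
  have hfin : ((L:ℝ))^2 ≤ 16 * (matchingWidth G : ℝ) := by
    exact_mod_cast keyNat
  show (Real.logb 2 ((nn r : ℕ) : ℝ))^2 / 16 ≤ (matchingWidth G : ℝ)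
  rw [div_le_iff₀ (by norm_num : (0:ℝ) < 16)]
  calc (Real.logb 2 ((nn r : ℕ) : ℝ))^2 ≤ ((L:ℝ))^2 := hsq
  _ ≤ 16 * (matchingWidth G : ℝ) := hfin
  _ = (matchingWidth G : ℝ) * 16 := by ring

end MWProof

/-- For all sufficiently large `r`, the matching width of `T_r(P_{2r})` is at least
`(log₂ n)²/16`, where `n` is the number of vertices of `T_r(P_{2r})`. -/
theorem matchingWidth_tree_path_lb :
    ∃ r₀ : ℕ, ∀ r : ℕ, r₀ ≤ r →
      (Real.logb 2 ((Fintype.card (Fin (2 ^ (r + 1) - 1) × Fin (2 * r)) : ℕ) : ℝ)) ^ 2 / 16 ≤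
        (matchingWidth (completeBinaryTree r □ SimpleGraph.pathGraph (2 * r)) : ℝ) := by
  exact ⟨4096, MWProof.matchingWidth_tree_path_lb'⟩
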